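/- For every admissible index k = (k_1,…,k_r) and every s ∈ ℂ with Re(s) > −1, the series defining the Ohno function, I_k(s) = Σ_{i=1}^{r} Σ_{0<n_1<⋯<n_r} (∏_{j=1}^{r} n_j^(−k_j)) · n_i^(−s) · ∏_{j≠i} n_j/(n_j−n_i), converges absolutely. -/

import Mathlib

open Finset Real

private def ohnoAux {r : ℕ} (i : Fin (r + 1)) (n : Fin (r + 1) → ℕ) (j : Fin (r + 1)) : ℕ :=
  if j = i then n i else if j < i then n i - n j else n j - n i

private lemma ohnoAux_self {r : ℕ} (i : Fin (r + 1)) (n : Fin (r + 1) → ℕ) :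
    ohnoAux i n i = n i := by simp [ohnoAux]

private lemma ohnoAux_pos {r : ℕ} {i j : Fin (r + 1)} (n : Fin (r + 1) → ℕ)
    (hm : StrictMono n) (h : j ≠ i) : 0 < ohnoAux i n j := by
  rcases lt_or_gt_of_ne h with hlt | hgt
  · have := hm hlt; simp only [ohnoAux, if_neg h, if_pos hlt]; omega
  · have := hm hgt; simp only [ohnoAux, if_neg h, if_neg (asymm hgt : ¬ j < i)]; omega

private lemma ohnoAux_le_left {r : ℕ} {i j : Fin (r + 1)} (n : Fin (r + 1) → ℕ)
    (hlt : j < i) : ohnoAux i n j ≤ n i := by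
  simp only [ohnoAux, if_neg (ne_of_lt hlt), if_pos hlt]; omega

private lemma ohnoAux_le_self {r : ℕ} {i j : Fin (r + 1)} (n : Fin (r + 1) → ℕ)
    (hgt : i < j) : ohnoAux i n j ≤ n j := by
  simp only [ohnoAux, if_neg (ne_of_gt hgt), if_neg (asymm hgt : ¬ j < i)]; omega

private lemma ohnoAux_le_mul {r : ℕ} {i j l : Fin (r + 1)} (n : Fin (r + 1) → ℕ)
    (hm : StrictMono n) (hp : 0 < n i) (hji : j ≠ i) (hjl : j < l) (hil : i < l) :
    ohnoAux i n j ≤ n i * ohnoAux i n l := by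
  have hl : ohnoAux i n l = n l - n i := by
    simp only [ohnoAux, if_neg (ne_of_gt hil), if_neg (asymm hil : ¬ l < i)]
  have hpos : 0 < ohnoAux i n l := ohnoAux_pos n hm (ne_of_gt hil)
  rcases lt_or_gt_of_ne hji with hlt | hgt
  · have h1 : ohnoAux i n j ≤ n i := ohnoAux_le_left n hlt
    calc ohnoAux i n j ≤ n i := h1
      _ = n i * 1 := (mul_one _).symm
      _ ≤ n i * ohnoAux i n l := Nat.mul_le_mul_left _ hpos
  · have hjl' : n j < n l := hm hjl
    have := hm hgt
    have h1 : ohnoAux i n j = n j - n i := by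
      simp only [ohnoAux, if_neg hji, if_neg (asymm hgt : ¬ j < i)]
    calc ohnoAux i n j = n j - n i := h1
      _ ≤ n l - n i := by omega
      _ = ohnoAux i n l := hl.symm
      _ ≤ n i * ohnoAux i n l := Nat.le_mul_of_pos_left _ hp

private lemma ohnoAux_abs {r : ℕ} {i j : Fin (r + 1)} (n : Fin (r + 1) → ℕ)
    (hm : StrictMono n) (h : j ≠ i) :
    |(n j : ℝ) - (n i : ℝ)| = (ohnoAux i n j : ℝ) := by
  rcases lt_or_gt_of_ne h with hlt | hgt
  · have h2 : n j < n i := hm hlt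
    rw [abs_of_neg (sub_neg.mpr (by exact_mod_cast h2 : ((n j : ℕ) : ℝ) < ((n i : ℕ) : ℝ)))]
    simp only [ohnoAux, if_neg h, if_pos hlt]
    push_cast [Nat.cast_sub h2.le]
    ring
  · have h2 : n i < n j := hm hgt
    rw [abs_of_pos (sub_pos.mpr (by exact_mod_cast h2 : ((n i : ℕ) : ℝ) < ((n j : ℕ) : ℝ)))]
    simp only [ohnoAux, if_neg h, if_neg (asymm hgt : ¬ j < i)]
    push_cast [Nat.cast_sub h2.le]
    ring

private lemma ohnoAux_recover {r : ℕ} (i : Fin (r + 1)) (n : Fin (r + 1) → ℕ)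
    (hm : StrictMono n) (j : Fin (r + 1)) :
    n j = if j = i then ohnoAux i n i else if j < i then ohnoAux i n i - ohnoAux i n j
      else ohnoAux i n i + ohnoAux i n j := by
  rw [ohnoAux_self]
  by_cases h : j = i
  · simp [h]
  · rcases lt_or_gt_of_ne h with hlt | hgt
    · have := hm hlt; simp only [ohnoAux, if_neg h, if_pos hlt]; omega
    · have := hm hgt; simp only [ohnoAux, if_neg h, if_neg (asymm hgt : ¬ j < i)]; omega

private lemma ohnoAux_inj {r : ℕ} (i : Fin (r + 1)) :
    Function.Injective fun n : {n : Fin (r + 1) → ℕ // StrictMono n ∧ ∀ l, 0 < n l} =>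
      ohnoAux i n.1 := by
  rintro ⟨n, hn, hn0⟩ ⟨n', hn', hn0'⟩ h
  simp only at h
  ext j
  show n j = n' j
  rw [ohnoAux_recover i n hn j, ohnoAux_recover i n' hn' j, h]

private lemma summable_pi_prod {m : ℕ} {f : ℕ → ℝ} (hf : Summable f) (h0 : ∀ x, 0 ≤ f x) :
    Summable (fun v : Fin m → ℕ => ∏ j, f (v j)) := by
  induction m with
  | zero => exact Summable.of_finite
  | succ m ih =>
    have hp : ∀ v : Fin m → ℕ, 0 ≤ ∏ j, f (v j) := fun v => Finset.prod_nonneg fun j _ => h0 _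
    have h2 : Summable (fun x : ℕ × (Fin m → ℕ) => f x.1 * ∏ j, f (x.2 j)) :=
      Summable.mul_of_nonneg (g := fun v : Fin m → ℕ => ∏ j, f (v j)) hf ih
        (Pi.le_def.mpr h0) (Pi.le_def.mpr hp)
    have h3 := ((Fin.consEquiv fun _ : Fin (m + 1) => ℕ).symm.summable_iff
      (f := fun x : ℕ × (Fin m → ℕ) => f x.1 * ∏ j, f (x.2 j))).mpr h2
    exact h3.congr (fun v => by simp [Fin.prod_univ_succ, Fin.consEquiv, Fin.tail])

private lemma fac_bound {Nj Mj C δ : ℝ} (hNj : 1 ≤ Nj) (hMj : 1 ≤ Mj) (hC : Mj ≤ C)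
    (hδ : 0 ≤ δ) {kj : ℕ} (hkj : 1 ≤ kj) :
    (Nj ^ kj)⁻¹ * (Nj / Mj) ≤ C ^ δ * Mj ^ (-(1 + δ)) := by
  have hNj0 : 0 < Nj := lt_of_lt_of_le one_pos hNj
  have hMj0 : 0 < Mj := lt_of_lt_of_le one_pos hMj
  have hC0 : 0 < C := lt_of_lt_of_le hMj0 hC
  have h1 : (Nj ^ kj)⁻¹ * Nj ≤ 1 := by
    have h2 : Nj ≤ Nj ^ kj := le_self_pow₀ hNj (by omega)
    calc (Nj ^ kj)⁻¹ * Nj ≤ (Nj ^ kj)⁻¹ * Nj ^ kj :=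
          mul_le_mul_of_nonneg_left h2 (by positivity)
      _ = 1 := inv_mul_cancel₀ (by positivity)
  have key : C ^ δ * Mj ^ (-(1 + δ)) = (C ^ δ * (Mj ^ δ)⁻¹) * Mj⁻¹ := by
    rw [Real.rpow_neg hMj0.le, Real.rpow_add hMj0, Real.rpow_one, mul_inv]
    ring
  have h4 : 1 ≤ C ^ δ * (Mj ^ δ)⁻¹ := by
    rw [← div_eq_mul_inv, le_div_iff₀ (by positivity), one_mul]
    exact Real.rpow_le_rpow hMj0.le hC hδ
  calc (Nj ^ kj)⁻¹ * (Nj / Mj) = ((Nj ^ kj)⁻¹ * Nj) * Mj⁻¹ := by rw [div_eq_mul_inv]; ring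
    _ ≤ 1 * Mj⁻¹ := mul_le_mul_of_nonneg_right h1 (by positivity)
    _ = Mj⁻¹ := one_mul _
    _ ≤ (C ^ δ * (Mj ^ δ)⁻¹) * Mj⁻¹ := le_mul_of_one_le_left (by positivity) h4
    _ = C ^ δ * Mj ^ (-(1 + δ)) := key.symm

private lemma facl_bound {Nl Ml Ni θ : ℝ} (hNl : 1 ≤ Nl) (hMl : 1 ≤ Ml) (hNi : 1 ≤ Ni)
    (hMN : Ml ≤ Nl) (hiN : Ni ≤ Nl) (hθ0 : 0 ≤ θ) (hθ1 : θ ≤ 1) {kl : ℕ} (hkl : 2 ≤ kl) :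
    (Nl ^ kl)⁻¹ * (Nl / Ml) ≤ Ni ^ (-θ) * Ml ^ (-(2 - θ)) := by
  have hNl0 : 0 < Nl := lt_of_lt_of_le one_pos hNl
  have hMl0 : 0 < Ml := lt_of_lt_of_le one_pos hMl
  have hNi0 : 0 < Ni := lt_of_lt_of_le one_pos hNi
  have h1 : (Nl ^ kl)⁻¹ * Nl ≤ Nl⁻¹ := by
    have h2 : Nl ^ 2 ≤ Nl ^ kl := pow_le_pow_right₀ hNl hkl
    calc (Nl ^ kl)⁻¹ * Nl ≤ (Nl ^ 2)⁻¹ * Nl :=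
          mul_le_mul_of_nonneg_right (inv_anti₀ (by positivity) h2) hNl0.le
      _ = Nl⁻¹ := by rw [sq, mul_inv, mul_assoc, inv_mul_cancel₀ (ne_of_gt hNl0), mul_one]
  have h3 : Ni ^ θ * Ml ^ (1 - θ) ≤ Nl := by
    calc Ni ^ θ * Ml ^ (1 - θ)
        ≤ Nl ^ θ * Nl ^ (1 - θ) :=
          mul_le_mul (Real.rpow_le_rpow hNi0.le hiN hθ0)
            (Real.rpow_le_rpow hMl0.le hMN (by linarith)) (by positivity) (by positivity)
      _ = Nl := by rw [← Real.rpow_add hNl0]; norm_num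
  have h4 : Nl⁻¹ ≤ (Ni ^ θ)⁻¹ * (Ml ^ (1 - θ))⁻¹ := by
    rw [← mul_inv]
    exact inv_anti₀ (by positivity) h3
  calc (Nl ^ kl)⁻¹ * (Nl / Ml) = ((Nl ^ kl)⁻¹ * Nl) * Ml⁻¹ := by rw [div_eq_mul_inv]; ring
    _ ≤ Nl⁻¹ * Ml⁻¹ := mul_le_mul_of_nonneg_right h1 (by positivity)
    _ ≤ ((Ni ^ θ)⁻¹ * (Ml ^ (1 - θ))⁻¹) * Ml⁻¹ := mul_le_mul_of_nonneg_right h4 (by positivity)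
    _ = Ni ^ (-θ) * Ml ^ (-(2 - θ)) := by
        rw [Real.rpow_neg hNi0.le, Real.rpow_neg hMl0.le,
          show (2 - θ) = (1 - θ) + 1 by ring, Real.rpow_add hMl0, Real.rpow_one, mul_inv]
        ring

private lemma ohno_key (r : ℕ) (k : Fin (r + 1) → ℕ)
    (hk1 : ∀ i, 1 ≤ k i) (hk2 : 2 ≤ k (Fin.last r))
    (σ c δ : ℝ) (hσ : -1 < σ) (hc0 : 0 < c) (hc1 : c ≤ 1) (hca : c ≤ (1 + σ)/2)
    (hδ0 : 0 < δ) (hδr : (r + 1 : ℝ) * δ = c / 2)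
    (i : Fin (r + 1)) (n : Fin (r + 1) → ℕ) (hm : StrictMono n) (hp : ∀ l, 0 < n l) :
    (∏ j, ((n j : ℝ) ^ k j)⁻¹) * (n i : ℝ) ^ (-σ) *
        ∏ j ∈ Finset.univ.erase i, (n j : ℝ) / (ohnoAux i n j : ℝ)
      ≤ ∏ j, 1 / ((ohnoAux i n j : ℝ) ^ (1 + δ)) := by
  classical
  have hN1 : ∀ j, (1 : ℝ) ≤ (n j : ℝ) := fun j => by exact_mod_cast hp j
  have hN0 : ∀ j, (0 : ℝ) < (n j : ℝ) := fun j => lt_of_lt_of_le one_pos (hN1 j)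
  have hM1 : ∀ j, j ≠ i → (1 : ℝ) ≤ (ohnoAux i n j : ℝ) := fun j hj => by
    exact_mod_cast ohnoAux_pos n hm hj
  set E : Finset (Fin (r + 1)) := Finset.univ.erase i with hE
  have hEcard : (E.card : ℝ) = r := by
    rw [hE, Finset.card_erase_of_mem (Finset.mem_univ i), Finset.card_univ, Fintype.card_fin]
    push_cast; ring
  -- rewrite RHS
  have hRHS : ∏ j, 1 / ((ohnoAux i n j : ℝ) ^ (1 + δ))
      = (n i : ℝ) ^ (-(1 + δ)) * ∏ j ∈ E, (ohnoAux i n j : ℝ) ^ (-(1 + δ)) := by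
    rw [← Finset.mul_prod_erase Finset.univ _ (Finset.mem_univ i), ← hE]
    congr 1
    · rw [ohnoAux_self, Real.rpow_neg (hN0 i).le, one_div]
    · exact Finset.prod_congr rfl fun j hj =>
        (by rw [Real.rpow_neg (by positivity), one_div])
  have hLHS : (∏ j, ((n j : ℝ) ^ k j)⁻¹) * (n i : ℝ) ^ (-σ) *
        ∏ j ∈ E, (n j : ℝ) / (ohnoAux i n j : ℝ)
      = ((n i : ℝ) ^ k i)⁻¹ * (n i : ℝ) ^ (-σ) *
        ∏ j ∈ E, (((n j : ℝ) ^ k j)⁻¹ * ((n j : ℝ) / (ohnoAux i n j : ℝ))) := by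
    rw [← Finset.mul_prod_erase Finset.univ (fun j => ((n j : ℝ) ^ k j)⁻¹) (Finset.mem_univ i),
      ← hE, Finset.prod_mul_distrib]
    ring
  rw [hRHS, hLHS]
  by_cases hi : i = Fin.last r
  · -- case i = last
    have hfac : ∀ j ∈ E, ((n j : ℝ) ^ k j)⁻¹ * ((n j : ℝ) / (ohnoAux i n j : ℝ))
        ≤ (n i : ℝ) ^ δ * (ohnoAux i n j : ℝ) ^ (-(1 + δ)) := by
      intro j hj
      have hji : j ≠ i := Finset.ne_of_mem_erase hj
      have hjlt : j < i := by
        rw [hi] at hji ⊢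
        exact Fin.lt_last_iff_ne_last.mpr hji
      have hle : (ohnoAux i n j : ℝ) ≤ (n i : ℝ) := by
        exact_mod_cast ohnoAux_le_left n hjlt
      exact fac_bound (hN1 j) (hM1 j hji) hle hδ0.le (hk1 j)
    calc ((n i : ℝ) ^ k i)⁻¹ * (n i : ℝ) ^ (-σ) *
          ∏ j ∈ E, (((n j : ℝ) ^ k j)⁻¹ * ((n j : ℝ) / (ohnoAux i n j : ℝ)))
        ≤ ((n i : ℝ) ^ k i)⁻¹ * (n i : ℝ) ^ (-σ) *
          ∏ j ∈ E, ((n i : ℝ) ^ δ * (ohnoAux i n j : ℝ) ^ (-(1 + δ))) := by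
          refine mul_le_mul_of_nonneg_left (Finset.prod_le_prod (fun j hj => ?_) hfac)
            (by positivity)
          have hji : j ≠ i := Finset.ne_of_mem_erase hj
          positivity
      _ = (((n i : ℝ) ^ k i)⁻¹ * (n i : ℝ) ^ (-σ) * ((n i : ℝ) ^ δ) ^ E.card) *
          ∏ j ∈ E, (ohnoAux i n j : ℝ) ^ (-(1 + δ)) := by
          rw [Finset.prod_mul_distrib, Finset.prod_const]; ring
      _ ≤ (n i : ℝ) ^ (-(1 + δ)) * ∏ j ∈ E, (ohnoAux i n j : ℝ) ^ (-(1 + δ)) := by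
          refine mul_le_mul_of_nonneg_right ?_
            (Finset.prod_nonneg fun j hj => by positivity)
          rw [← Real.rpow_natCast (n i : ℝ) (k i), ← Real.rpow_neg (hN0 i).le,
            ← Real.rpow_natCast ((n i : ℝ) ^ δ) E.card, ← Real.rpow_mul (hN0 i).le,
            ← Real.rpow_add (hN0 i), ← Real.rpow_add (hN0 i)]
          apply Real.rpow_le_rpow_of_exponent_le (hN1 i)
          have hki : (2 : ℝ) ≤ (k i : ℝ) := by exact_mod_cast hi ▸ hk2
          have hsum : δ * (E.card : ℝ) + δ = c / 2 := by rw [hEcard, ← hδr]; ring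
          linarith
  · -- case i ≠ last
    set l := Fin.last r with hl
    have hil : i < l := Fin.lt_last_iff_ne_last.mpr hi
    have hlE : l ∈ E := Finset.mem_erase.mpr ⟨(ne_of_lt hil).symm, Finset.mem_univ _⟩
    set E' : Finset (Fin (r + 1)) := E.erase l with hE'
    have hE'card : (E'.card : ℝ) ≤ r := by
      have h1 : E'.card ≤ E.card := Finset.card_erase_le
      have h2 : (E.card : ℝ) = r := hEcard
      exact_mod_cast le_trans (Nat.cast_le.mpr h1) (le_of_eq h2)
    set θ : ℝ := max 0 ((1 - σ)/2) with hθ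
    have hθ0 : 0 ≤ θ := le_max_left _ _
    have hθc : θ ≤ 1 - c := max_le (by linarith) (by linarith)
    have hθ1 : θ ≤ 1 := by linarith
    have hσθ : c ≤ σ + θ := by
      rcases le_total σ 1 with h | h
      · have : (1 - σ)/2 ≤ θ := le_max_right _ _
        linarith
      · linarith
    have hNil : (n i : ℝ) ≤ (n l : ℝ) := by exact_mod_cast (hm.monotone hil.le)
    have hMl1 : (1 : ℝ) ≤ (ohnoAux i n l : ℝ) := hM1 l (ne_of_gt hil)
    have hMlNl : (ohnoAux i n l : ℝ) ≤ (n l : ℝ) := by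
      exact_mod_cast ohnoAux_le_self n hil
    have hfacl : ((n l : ℝ) ^ k l)⁻¹ * ((n l : ℝ) / (ohnoAux i n l : ℝ))
        ≤ (n i : ℝ) ^ (-θ) * (ohnoAux i n l : ℝ) ^ (-(2 - θ)) :=
      facl_bound (hN1 l) hMl1 (hN1 i) hMlNl hNil hθ0 hθ1 hk2
    have hfac : ∀ j ∈ E', ((n j : ℝ) ^ k j)⁻¹ * ((n j : ℝ) / (ohnoAux i n j : ℝ))
        ≤ ((n i : ℝ) * (ohnoAux i n l : ℝ)) ^ δ * (ohnoAux i n j : ℝ) ^ (-(1 + δ)) := by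
      intro j hj
      have hjl : j ≠ l := Finset.ne_of_mem_erase hj
      have hji : j ≠ i := Finset.ne_of_mem_erase (Finset.mem_of_mem_erase hj)
      have hjl' : j < l := Fin.lt_last_iff_ne_last.mpr hjl
      have hle : (ohnoAux i n j : ℝ) ≤ (n i : ℝ) * (ohnoAux i n l : ℝ) := by
        exact_mod_cast ohnoAux_le_mul n hm (hp i) hji hjl' hil
      exact fac_bound (hN1 j) (hM1 j hji) hle hδ0.le (hk1 j)
    rw [← Finset.mul_prod_erase E _ hlE, ← hE',
      ← Finset.mul_prod_erase E (fun j => (ohnoAux i n j : ℝ) ^ (-(1 + δ))) hlE, ← hE']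
    calc ((n i : ℝ) ^ k i)⁻¹ * (n i : ℝ) ^ (-σ) *
          ((((n l : ℝ) ^ k l)⁻¹ * ((n l : ℝ) / (ohnoAux i n l : ℝ))) *
            ∏ j ∈ E', (((n j : ℝ) ^ k j)⁻¹ * ((n j : ℝ) / (ohnoAux i n j : ℝ))))
        ≤ ((n i : ℝ) ^ k i)⁻¹ * (n i : ℝ) ^ (-σ) *
          (((n i : ℝ) ^ (-θ) * (ohnoAux i n l : ℝ) ^ (-(2 - θ))) *
            ∏ j ∈ E', (((n i : ℝ) * (ohnoAux i n l : ℝ)) ^ δ *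
              (ohnoAux i n j : ℝ) ^ (-(1 + δ)))) := by
          refine mul_le_mul_of_nonneg_left
            (mul_le_mul hfacl (Finset.prod_le_prod (fun j hj => ?_) hfac)
              (Finset.prod_nonneg fun j hj => ?_) (by positivity)) (by positivity)
          · positivity
          · positivity
      _ = (((n i : ℝ) ^ k i)⁻¹ * (n i : ℝ) ^ (-σ) * (n i : ℝ) ^ (-θ) *
            ((n i : ℝ) ^ δ) ^ E'.card) *
          ((ohnoAux i n l : ℝ) ^ (-(2 - θ)) * ((ohnoAux i n l : ℝ) ^ δ) ^ E'.card) *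
          ∏ j ∈ E', (ohnoAux i n j : ℝ) ^ (-(1 + δ)) := by
          rw [Finset.prod_mul_distrib, Finset.prod_const,
            Real.mul_rpow (hN0 i).le (by positivity), mul_pow]
          ring
      _ ≤ ((n i : ℝ) ^ (-(1 + δ))) * ((ohnoAux i n l : ℝ) ^ (-(1 + δ))) *
          ∏ j ∈ E', (ohnoAux i n j : ℝ) ^ (-(1 + δ)) := by
          refine mul_le_mul_of_nonneg_right
            (mul_le_mul ?_ ?_ (by positivity) (by positivity))
            (Finset.prod_nonneg fun j hj => by positivity)
          · rw [← Real.rpow_natCast (n i : ℝ) (k i), ← Real.rpow_neg (hN0 i).le,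
              ← Real.rpow_natCast ((n i : ℝ) ^ δ) E'.card, ← Real.rpow_mul (hN0 i).le,
              ← Real.rpow_add (hN0 i), ← Real.rpow_add (hN0 i), ← Real.rpow_add (hN0 i)]
            apply Real.rpow_le_rpow_of_exponent_le (hN1 i)
            have hki : (1 : ℝ) ≤ (k i : ℝ) := by exact_mod_cast hk1 i
            have hsum : δ * (E'.card : ℝ) + δ ≤ c / 2 := by
              have h1 : δ * (E'.card : ℝ) ≤ δ * (r : ℝ) :=
                mul_le_mul_of_nonneg_left hE'card hδ0.le
              have h2 : δ * (r : ℝ) + δ = c / 2 := by rw [← hδr]; ring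
              linarith
            linarith
          · have hMl0 : (0 : ℝ) < (ohnoAux i n l : ℝ) := lt_of_lt_of_le one_pos hMl1
            rw [← Real.rpow_natCast ((ohnoAux i n l : ℝ) ^ δ) E'.card,
              ← Real.rpow_mul hMl0.le, ← Real.rpow_add hMl0]
            apply Real.rpow_le_rpow_of_exponent_le hMl1
            have hsum : δ * (E'.card : ℝ) + δ ≤ c / 2 := by
              have h1 : δ * (E'.card : ℝ) ≤ δ * (r : ℝ) :=
                mul_le_mul_of_nonneg_left hE'card hδ0.le
              have h2 : δ * (r : ℝ) + δ = c / 2 := by rw [← hδr]; ring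
              linarith
            linarith
      _ = (n i : ℝ) ^ (-(1 + δ)) * ((ohnoAux i n l : ℝ) ^ (-(1 + δ)) *
          ∏ j ∈ E', (ohnoAux i n j : ℝ) ^ (-(1 + δ))) := by ring


/-- **Absolute convergence of the Ohno function series.** For an admissible index
`(k₁, …, k_{r+1})` and `s ∈ ℂ` with `Re s > -1`, the double series
`I_k(s) = ∑_{i} ∑_{0<n₁<⋯<n_{r+1}} (∏_j n_j^{-k_j}) n_i^{-s} ∏_{j≠i} n_j/(n_j-n_i)`
converges absolutely. -/
theorem ohnoFun_summable (r : ℕ) (k : Fin (r + 1) → ℕ)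
    (hk1 : ∀ i, 1 ≤ k i) (hk2 : 2 ≤ k (Fin.last r))
    (s : ℂ) (hs : -1 < s.re) :
    Summable (fun p : Fin (r + 1) ×
        {n : Fin (r + 1) → ℕ // StrictMono n ∧ ∀ i, 0 < n i} =>
      ‖(∏ j, ((p.2.1 j : ℂ) ^ k j)⁻¹) * (p.2.1 p.1 : ℂ) ^ (-s) *
        ∏ j ∈ Finset.univ.erase p.1,
          (p.2.1 j : ℂ) / ((p.2.1 j : ℂ) - (p.2.1 p.1 : ℂ))‖) := by
  classical
  have ha : (0:ℝ) < 1 + s.re := by linarith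
  set c : ℝ := min ((1 + s.re)/2) 1 with hcdef
  have hc0 : 0 < c := lt_min (by linarith) one_pos
  have hc1 : c ≤ 1 := min_le_right _ _
  have hca : c ≤ (1 + s.re)/2 := min_le_left _ _
  set δ : ℝ := c / (2 * (r + 1)) with hddef
  have hd0 : 0 < δ := div_pos hc0 (by positivity)
  have hdr : (r + 1 : ℝ) * δ = c / 2 := by
    rw [hddef]; field_simp
  have hgs : Summable (fun m : ℕ => 1 / (m:ℝ) ^ (1 + δ)) :=
    Real.summable_one_div_nat_rpow.mpr (by linarith)
  have hg0 : ∀ x : ℕ, 0 ≤ 1 / (x:ℝ) ^ (1 + δ) := fun x => by positivity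
  rw [summable_prod_of_nonneg (fun p => norm_nonneg _)]
  refine ⟨fun i => ?_, Summable.of_finite⟩
  refine Summable.of_nonneg_of_le (fun n => norm_nonneg _) ?_
    ((summable_pi_prod hgs hg0).comp_injective (ohnoAux_inj i))
  rintro ⟨n, hm, hp⟩
  show ‖(∏ j, ((n j : ℂ) ^ k j)⁻¹) * (n i : ℂ) ^ (-s) *
        ∏ j ∈ Finset.univ.erase i, (n j : ℂ) / ((n j : ℂ) - (n i : ℂ))‖
      ≤ ∏ j, 1 / ((ohnoAux i n j : ℝ) ^ (1 + δ))
  have hnorm : ‖(∏ j, ((n j : ℂ) ^ k j)⁻¹) * (n i : ℂ) ^ (-s) *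
        ∏ j ∈ Finset.univ.erase i, (n j : ℂ) / ((n j : ℂ) - (n i : ℂ))‖
      = (∏ j, ((n j : ℝ) ^ k j)⁻¹) * (n i : ℝ) ^ (-s.re) *
        ∏ j ∈ Finset.univ.erase i, (n j : ℝ) / (ohnoAux i n j : ℝ) := by
    rw [norm_mul, norm_mul, norm_prod, norm_prod]
    congr 1
    · congr 1
      · exact Finset.prod_congr rfl fun j _ => by
          rw [norm_inv, norm_pow, Complex.norm_natCast]
      · rw [Complex.norm_natCast_cpow_of_pos (hp i)]
        simp
    · refine Finset.prod_congr rfl fun j hj => ?_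
      rw [norm_div, Complex.norm_natCast]
      congr 1
      have hji : j ≠ i := Finset.ne_of_mem_erase hj
      have hcast : ((n j : ℂ) - (n i : ℂ)) = (((n j : ℝ) - (n i : ℝ) : ℝ) : ℂ) := by
        push_cast; ring
      rw [hcast, Complex.norm_real, Real.norm_eq_abs, ohnoAux_abs n hm hji]
  rw [hnorm]
  exact ohno_key r k hk1 hk2 s.re c δ hs hc0 hc1 hca hd0 hdr i n hm hp
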